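/- For every real number t, the integral over ℝ of x ↦ cos(t·x) / (π·(1 + x²)) with respect to Lebesgue measure equals exp(−|t|). In other words, the characteristic function of the standard Cauchy distribution is t ↦ e^{−|t|}. -/

import Mathlib

open Real MeasureTheory

open Filter Topology intervalIntegral

lemma integrable_exp_neg_abs' : Integrable (fun x : ℝ => Real.exp (-|x|)) := by
  have h1 : IntegrableOn (fun x : ℝ => Real.exp (-|x|)) (Set.Ioi 0) := by
    refine (exp_neg_integrableOn_Ioi 0 one_pos).congr_fun (fun x hx => ?_) measurableSet_Ioi
    rw [abs_of_pos hx]; beta_reduce; rw [neg_one_mul]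
  have h2 : IntegrableOn (fun x : ℝ => Real.exp (-|x|)) (Set.Iic 0) := by
    rw [← Measure.map_neg_eq_self (volume : Measure ℝ)]
    have m : MeasurableEmbedding fun x : ℝ => -x := (Homeomorph.neg ℝ).measurableEmbedding
    rw [m.integrableOn_map_iff]
    simp_rw [Function.comp_def, abs_neg, Set.neg_preimage, Set.neg_Iic, neg_zero]
    exact Iff.mpr integrableOn_Ici_iff_integrableOn_Ioi h1
  have h := h2.union h1
  rw [Set.Iic_union_Ioi] at h
  exact integrableOn_univ.mp h

lemma integral_sin_mul_even {φ : ℝ → ℝ} (hφ : ∀ x, φ (-x) = φ x) (s : ℝ) :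
    ∫ x : ℝ, Real.sin (s * x) * φ x = 0 := by
  have h := integral_neg_eq_self (fun x : ℝ => Real.sin (s * x) * φ x) (volume : Measure ℝ)
  simp only [mul_neg, Real.sin_neg, hφ, neg_mul] at h
  rw [MeasureTheory.integral_neg] at h
  linarith

lemma integral_cexp_mul_even {φ : ℝ → ℝ} (hφi : Integrable φ) (hφ : ∀ x, φ (-x) = φ x) (s : ℝ) :
    ∫ x : ℝ, Complex.exp ((s * x : ℝ) * Complex.I) * (φ x : ℂ)
      = ((∫ x : ℝ, Real.cos (s * x) * φ x : ℝ) : ℂ) := by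
  have hint1 : Integrable fun x : ℝ => Real.cos (s * x) * φ x :=
    hφi.bdd_mul (Continuous.aestronglyMeasurable (by continuity)) (c := 1) (Filter.Eventually.of_forall fun x => by simpa using Real.abs_cos_le_one _)
  have hint2 : Integrable fun x : ℝ => Real.sin (s * x) * φ x :=
    hφi.bdd_mul (Continuous.aestronglyMeasurable (by continuity)) (c := 1) (Filter.Eventually.of_forall fun x => by simpa using Real.abs_sin_le_one _)
  have key : ∀ x : ℝ, Complex.exp ((s * x : ℝ) * Complex.I) * (φ x : ℂ)
      = ((Real.cos (s * x) * φ x : ℝ) : ℂ) + ((Real.sin (s * x) * φ x : ℝ) : ℂ) * Complex.I := by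
    intro x
    rw [Complex.exp_mul_I]
    push_cast [Complex.ofReal_cos, Complex.ofReal_sin]
    ring
  simp_rw [key]
  have h1 : Integrable (fun x : ℝ => ((Real.cos (s * x) * φ x : ℝ) : ℂ)) := hint1.ofReal
  have h2 : Integrable (fun x : ℝ => ((Real.sin (s * x) * φ x : ℝ) : ℂ) * Complex.I) :=
    hint2.ofReal.mul_const Complex.I
  rw [MeasureTheory.integral_add h1 h2, MeasureTheory.integral_mul_const,
    show (∫ a : ℝ, ((Real.sin (s * a) * φ a : ℝ) : ℂ)) = ((∫ a : ℝ, Real.sin (s * a) * φ a : ℝ) : ℂ)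
      from integral_ofReal,
    integral_sin_mul_even hφ s,
    show (∫ a : ℝ, ((Real.cos (s * a) * φ a : ℝ) : ℂ)) = ((∫ a : ℝ, Real.cos (s * a) * φ a : ℝ) : ℂ)
      from integral_ofReal]
  simp
lemma integral_exp_neg_cos (s : ℝ) :
    ∫ x in Set.Ioi (0:ℝ), Real.exp (-x) * Real.cos (s * x) = 1 / (1 + s ^ 2) := by
  have hne : (1:ℝ) + s ^ 2 ≠ 0 := by positivity
  set F : ℝ → ℝ := fun x => Real.exp (-x) * (s * Real.sin (s * x) - Real.cos (s * x)) / (1 + s ^ 2)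
    with hF
  have hderiv : ∀ x ∈ Set.Ici (0:ℝ), HasDerivAt F (Real.exp (-x) * Real.cos (s * x)) x := by
    intro x _
    have h1 : HasDerivAt (fun y : ℝ => Real.exp (-y)) (-Real.exp (-x)) x := by
      simpa using ((hasDerivAt_neg x).exp)
    have hs : HasDerivAt (fun y : ℝ => s * y) s x := by
      simpa using (hasDerivAt_id x).const_mul s
    have h2 : HasDerivAt (fun y : ℝ => s * Real.sin (s * y) - Real.cos (s * y))
        (s * (Real.cos (s * x) * s) - -Real.sin (s * x) * s) x :=
      ((hs.sin).const_mul s).sub (hs.cos)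
    have h3 := (h1.mul h2).div_const (1 + s ^ 2)
    refine h3.congr_deriv ?_
    rw [div_eq_iff hne]
    ring
  have hint : IntegrableOn (fun x : ℝ => Real.exp (-x) * Real.cos (s * x)) (Set.Ioi 0) := by
    have hbase : IntegrableOn (fun x : ℝ => Real.exp (-(1:ℝ) * x)) (Set.Ioi 0) :=
      exp_neg_integrableOn_Ioi 0 one_pos
    have := hbase.bdd_mul (f := fun x : ℝ => Real.cos (s * x))
      (Continuous.aestronglyMeasurable (by continuity)) (c := 1)
      (Filter.Eventually.of_forall fun x => by simpa using Real.abs_cos_le_one _)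
    refine (IntegrableOn.congr_fun this (fun x _ => ?_) measurableSet_Ioi : _)
    simp only [neg_one_mul]
    ring
  have htend : Filter.Tendsto F Filter.atTop (nhds 0) := by
    have hb : Filter.Tendsto (fun x : ℝ => Real.exp (-x) * ((|s| + 1) / (1 + s ^ 2)))
        Filter.atTop (nhds 0) := by
      simpa using (Real.tendsto_exp_neg_atTop_nhds_zero.mul_const ((|s| + 1) / (1 + s ^ 2)))
    refine squeeze_zero_norm (fun x => ?_) hb
    rw [hF]
    simp only [Real.norm_eq_abs, abs_div, abs_mul]
    rw [abs_of_pos (by positivity : (0:ℝ) < 1 + s ^ 2), abs_of_pos (Real.exp_pos _),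
      div_le_iff₀ (by positivity : (0:ℝ) < 1 + s ^ 2)]
    have h1 : |s * Real.sin (s * x) - Real.cos (s * x)| ≤ |s| + 1 := by
      calc |s * Real.sin (s * x) - Real.cos (s * x)|
          ≤ |s * Real.sin (s * x)| + |Real.cos (s * x)| := abs_sub _ _
        _ ≤ |s| * 1 + 1 := by
            rw [abs_mul]
            gcongr <;> first
              | exact Real.abs_sin_le_one _
              | exact Real.abs_cos_le_one _
        _ = |s| + 1 := by ring
    calc Real.exp (-x) * |s * Real.sin (s * x) - Real.cos (s * x)|
        ≤ Real.exp (-x) * (|s| + 1) := mul_le_mul_of_nonneg_left h1 (Real.exp_pos _).le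
      _ = Real.exp (-x) * ((|s| + 1) / (1 + s ^ 2)) * (1 + s ^ 2) := by field_simp
  have := integral_Ioi_of_hasDerivAt_of_tendsto' hderiv hint htend
  rw [this, hF]
  simp [Real.exp_zero]
  rw [neg_div, neg_neg, one_div]

lemma integral_exp_neg_abs_cos (s : ℝ) :
    ∫ x : ℝ, Real.cos (s * x) * Real.exp (-|x|) = 2 / (1 + s ^ 2) := by
  have key : ∀ x : ℝ, Real.cos (s * x) * Real.exp (-|x|)
      = (fun y : ℝ => Real.exp (-y) * Real.cos (s * y)) |x| := by
    intro x
    rcases abs_choice x with h | h <;> rw [h] <;>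
      simp [mul_neg, Real.cos_neg, mul_comm]
  calc ∫ x : ℝ, Real.cos (s * x) * Real.exp (-|x|)
      = ∫ x : ℝ, (fun y : ℝ => Real.exp (-y) * Real.cos (s * y)) |x| := by
        exact integral_congr_ae (Filter.Eventually.of_forall key)
    _ = 2 * ∫ x in Set.Ioi (0:ℝ), Real.exp (-x) * Real.cos (s * x) :=
        integral_comp_abs (f := fun y : ℝ => Real.exp (-y) * Real.cos (s * y))
    _ = 2 / (1 + s ^ 2) := by rw [integral_exp_neg_cos]; ring

open FourierTransform in
lemma fourier_exp_neg_abs (ξ : ℝ) :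
    𝓕 (fun x : ℝ => (Real.exp (-|x|) : ℂ)) ξ = ((2 / (1 + (2 * π * ξ) ^ 2) : ℝ) : ℂ) := by
  rw [Real.fourier_real_eq_integral_exp_smul]
  have key : ∀ v : ℝ, Complex.exp (↑(-2 * π * v * ξ) * Complex.I) • (Real.exp (-|v|) : ℂ)
      = Complex.exp ((((-2 * π * ξ) * v : ℝ)) * Complex.I) * ((Real.exp (-|v|) : ℝ) : ℂ) := by
    intro v
    rw [smul_eq_mul, show (-2 * π * v * ξ : ℝ) = (-2 * π * ξ) * v by ring]
  simp_rw [key]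
  rw [integral_cexp_mul_even integrable_exp_neg_abs' (fun x => by rw [abs_neg]) (-2 * π * ξ),
    integral_exp_neg_abs_cos]
  norm_num

lemma integrable_aux (c : ℝ) (hc : c ≠ 0) : Integrable (fun ξ : ℝ => 2 / (1 + (c * ξ) ^ 2)) := by
  have h := (integrable_inv_one_add_sq.comp_mul_left' hc).const_mul 2
  refine h.congr (Filter.Eventually.of_forall (fun x => ?_))
  simp [div_eq_mul_inv]

open FourierTransform in
lemma exp_eq_integral (t : ℝ) :
    Real.exp (-|t|) = ∫ ξ : ℝ, Real.cos (2 * π * t * ξ) * (2 / (1 + (2 * π * ξ) ^ 2)) := by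
  set g : ℝ → ℂ := fun x => (Real.exp (-|x|) : ℂ) with hg
  have hgc : Continuous g := Complex.continuous_ofReal.comp (Real.continuous_exp.comp continuous_abs.neg)
  have hgi : Integrable g := integrable_exp_neg_abs'.ofReal
  have hFgi : Integrable (𝓕 g) := by
    have : 𝓕 g = fun ξ : ℝ => ((2 / (1 + (2 * π * ξ) ^ 2) : ℝ) : ℂ) := funext fourier_exp_neg_abs
    rw [this]
    exact (integrable_aux (2 * π) (by positivity)).ofReal
  have hinv : 𝓕⁻ (𝓕 g) t = g t := hgi.fourierInv_fourier_eq hFgi hgc.continuousAt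
  have hlhs : 𝓕⁻ (𝓕 g) t
      = ((∫ ξ : ℝ, Real.cos (2 * π * t * ξ) * (2 / (1 + (2 * π * ξ) ^ 2)) : ℝ) : ℂ) := by
    rw [Real.fourierInv_eq_fourier_neg,
      Real.fourier_real_eq_integral_exp_smul]
    have key : ∀ v : ℝ, Complex.exp (↑(-2 * π * v * -t) * Complex.I) • 𝓕 g v
        = Complex.exp ((((2 * π * t) * v : ℝ)) * Complex.I)
          * ((2 / (1 + (2 * π * v) ^ 2) : ℝ) : ℂ) := by
      intro v
      rw [smul_eq_mul, fourier_exp_neg_abs,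
        show (-2 * π * v * -t : ℝ) = (2 * π * t) * v by ring]
    simp_rw [key]
    rw [integral_cexp_mul_even (integrable_aux (2 * π) (by positivity))
      (fun x => by rw [mul_neg, neg_sq]) (2 * π * t)]
  rw [hlhs] at hinv
  have h2 := hinv.symm
  simp only [hg] at h2
  exact_mod_cast h2


/-- the characteristic function of the standard Cauchy distribution:
∫ cos(t·x) / (π(1+x²)) dx = e^{−|t|} for every real t. -/
theorem cauchy_characteristic_function (t : ℝ) :
    ∫ x : ℝ, Real.cos (t * x) / (Real.pi * (1 + x ^ 2)) = Real.exp (-|t|) := by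
  rw [exp_eq_integral t]
  have h := MeasureTheory.Measure.integral_comp_mul_left
    (fun x : ℝ => Real.cos (t * x) / (Real.pi * (1 + x ^ 2))) (2 * π)
  have hπ : (0:ℝ) < π := Real.pi_pos
  have key : ∀ ξ : ℝ, Real.cos (2 * π * t * ξ) * (2 / (1 + (2 * π * ξ) ^ 2))
      = (2 * π) * (Real.cos (t * (2 * π * ξ)) / (Real.pi * (1 + (2 * π * ξ) ^ 2))) := by
    intro ξ
    have hne : Real.pi * (1 + (2 * π * ξ) ^ 2) ≠ 0 := by positivity
    rw [show 2 * π * t * ξ = t * (2 * π * ξ) by ring]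
    field_simp
  calc ∫ x : ℝ, Real.cos (t * x) / (Real.pi * (1 + x ^ 2))
      = (2 * π) * ((2 * π)⁻¹ * ∫ x : ℝ, Real.cos (t * x) / (Real.pi * (1 + x ^ 2))) := by
        field_simp
    _ = (2 * π) * ∫ ξ : ℝ, Real.cos (t * (2 * π * ξ)) / (Real.pi * (1 + (2 * π * ξ) ^ 2)) := by
        rw [h, smul_eq_mul, abs_of_pos (by positivity : (0:ℝ) < (2 * π)⁻¹)]
    _ = ∫ ξ : ℝ, (2 * π) * (Real.cos (t * (2 * π * ξ)) / (Real.pi * (1 + (2 * π * ξ) ^ 2))) := by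
        rw [MeasureTheory.integral_const_mul]
    _ = ∫ ξ : ℝ, Real.cos (2 * π * t * ξ) * (2 / (1 + (2 * π * ξ) ^ 2)) := by
        exact integral_congr_ae (Filter.Eventually.of_forall (fun ξ => (key ξ).symm))
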